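/- Let f: Ω → Ω' be an η-quasisymmetric homeomorphism between bounded A-uniform metric spaces, extended to the completions, and let w ∈ Ω satisfy d(w) = max_{x∈Ω} d(x). Then diam Ω' ≤ 2η(4A) · d'(f(w)), where d'(y) = dist(y, ∂Ω'). -/

import Mathlib

open Filter Set Metric Real MeasureTheory UniformSpace

noncomputable section

/-- The metric boundary of `Ω`: the complement of `Ω` in its metric completion. -/
def mbdry (Ω : Type*) [MetricSpace Ω] : Set (Completion Ω) :=
  (Set.range ((↑) : Ω → Completion Ω))ᶜ

/-- The distance `d(x) = dist(x, ∂Ω)` from `x` to the metric boundary of `Ω`. -/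
def bdist {Ω : Type*} [MetricSpace Ω] (x : Ω) : ℝ :=
  Metric.infDist (x : Completion Ω) (mbdry Ω)

/-- `Ω` is an `A`-uniform metric space: every pair of points is joined by an
(arclength parametrized) curve that is `A`-quasiconvex and satisfies the `A`-cigar
condition with respect to the distance to the metric boundary. -/
def IsUniformSpaceA (Ω : Type*) [MetricSpace Ω] (A : ℝ) : Prop :=
  ∀ x y : Ω, ∃ T : ℝ, ∃ γ : ℝ → Ω, 0 ≤ T ∧ γ 0 = x ∧ γ T = y ∧
    (∀ a ∈ Icc (0:ℝ) T, ∀ b ∈ Icc (0:ℝ) T, dist (γ a) (γ b) ≤ |a - b|) ∧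
    eVariationOn γ (Icc 0 T) ≤ ENNReal.ofReal (A * dist x y) ∧
    ∀ t ∈ Icc (0:ℝ) T,
      min (eVariationOn γ (Icc 0 t)) (eVariationOn γ (Icc t T)) ≤
        ENNReal.ofReal (A * bdist (γ t))

namespace QSAux

lemma bdist_nonneg {Ω : Type*} [MetricSpace Ω] (x : Ω) : 0 ≤ bdist x :=
  Metric.infDist_nonneg

lemma bdist_le_add {Ω : Type*} [MetricSpace Ω] (a b : Ω) :
    bdist a ≤ bdist b + dist a b := by
  have h := Metric.infDist_le_infDist_add_dist
    (x := (a : Completion Ω)) (y := (b : Completion Ω)) (s := mbdry Ω)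
  simpa [bdist, Completion.dist_eq] using h

/-- Every point of a bounded `A`-uniform space is within `2·A·d(w)` of any other,
where `w` maximizes the distance to the metric boundary. -/
lemma dist_le_of_uniform {Ω : Type*} [MetricSpace Ω] {A : ℝ} (hA : 1 ≤ A)
    (huni : IsUniformSpaceA Ω A) (w : Ω) (hw : ∀ x : Ω, bdist x ≤ bdist w)
    (x y : Ω) : dist x y ≤ 2 * A * bdist w := by
  obtain ⟨T, γ, hT, hγ0, hγT, hlip, hvar, hcig⟩ := huni x y
  have hfin : eVariationOn γ (Icc 0 T) ≠ ⊤ :=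
    (lt_of_le_of_lt hvar ENNReal.ofReal_lt_top).ne
  -- additivity of variation
  have hadd : ∀ s t : ℝ, s ∈ Icc (0:ℝ) T → t ∈ Icc (0:ℝ) T → s ≤ t →
      eVariationOn γ (Icc 0 s) + eVariationOn γ (Icc s t) = eVariationOn γ (Icc 0 t) := by
    intro s t hs ht hst
    have e1 : Icc (0:ℝ) T ∩ Icc 0 s = Icc 0 s :=
      inter_eq_self_of_subset_right (Icc_subset_Icc le_rfl hs.2)
    have e2 : Icc (0:ℝ) T ∩ Icc s t = Icc s t :=
      inter_eq_self_of_subset_right (Icc_subset_Icc hs.1 ht.2)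
    have e3 : Icc (0:ℝ) T ∩ Icc 0 t = Icc 0 t :=
      inter_eq_self_of_subset_right (Icc_subset_Icc le_rfl ht.2)
    have h := eVariationOn.Icc_add_Icc γ (s := Icc (0:ℝ) T) (a := 0) (b := s) (c := t)
      hs.1 hst hs
    rwa [e1, e2, e3] at h
  have hfin' : ∀ t ∈ Icc (0:ℝ) T, eVariationOn γ (Icc 0 t) ≠ ⊤ := by
    intro t ht
    exact (lt_of_le_of_lt (eVariationOn.mono γ (Icc_subset_Icc le_rfl ht.2)) hfin.lt_top).ne
  -- the variation over a subinterval is bounded by its length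
  have hpiece : ∀ s t : ℝ, s ∈ Icc (0:ℝ) T → t ∈ Icc (0:ℝ) T →
      eVariationOn γ (Icc s t) ≤ ENNReal.ofReal (t - s) := by
    intro s t hs ht
    rcases le_or_gt s t with hst | hst
    · have hlip' : LipschitzOnWith 1 γ (Icc s t) := by
        apply LipschitzOnWith.of_dist_le_mul
        intro a ha b hb
        have ha' : a ∈ Icc (0:ℝ) T := Icc_subset_Icc hs.1 ht.2 ha
        have hb' : b ∈ Icc (0:ℝ) T := Icc_subset_Icc hs.1 ht.2 hb
        have := hlip a ha' b hb'
        simpa [Real.dist_eq] using this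
      have h1 : eVariationOn (γ ∘ id) (Icc s t) ≤ 1 * eVariationOn id (Icc s t) :=
        hlip'.comp_eVariationOn_le (Set.mapsTo_id _)
      have h2 : eVariationOn (id : ℝ → ℝ) (Icc s t) ≤ ENNReal.ofReal (t - s) := by
        have := (monotoneOn_id (s := Icc s t)).eVariationOn_le
          (a := s) (b := t) ⟨le_rfl, hst⟩ ⟨hst, le_rfl⟩
        simpa using this
      calc eVariationOn γ (Icc s t) = eVariationOn (γ ∘ id) (Icc s t) := rfl
        _ ≤ 1 * eVariationOn id (Icc s t) := h1
        _ = eVariationOn (id : ℝ → ℝ) (Icc s t) := by simp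
        _ ≤ ENNReal.ofReal (t - s) := h2
    · have : Icc s t = ∅ := Icc_eq_empty (not_le.2 hst)
      rw [this]
      simpa using (eVariationOn.subsingleton γ (subsingleton_empty)).le.trans (zero_le _)
  set g : ℝ → ℝ := fun t => (eVariationOn γ (Icc 0 t)).toReal with hgdef
  have hkey : ∀ a ∈ Icc (0:ℝ) T, ∀ b ∈ Icc (0:ℝ) T, a ≤ b →
      g a ≤ g b ∧ g b - g a ≤ b - a := by
    intro a ha b hb hab
    have hadd' := hadd a b ha hb hab
    have h1 : eVariationOn γ (Icc 0 a) ≠ ⊤ := hfin' a ha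
    have h2 : eVariationOn γ (Icc a b) ≠ ⊤ :=
      (lt_of_le_of_lt (hpiece a b ha hb) ENNReal.ofReal_lt_top).ne
    have hb' : g b = g a + (eVariationOn γ (Icc a b)).toReal := by
      simp only [hgdef]
      rw [← hadd', ENNReal.toReal_add h1 h2]
    have h3 : (eVariationOn γ (Icc a b)).toReal ≤ b - a :=
      ENNReal.toReal_le_of_le_ofReal (by linarith) (hpiece a b ha hb)
    constructor
    · rw [hb']
      have : 0 ≤ (eVariationOn γ (Icc a b)).toReal := ENNReal.toReal_nonneg
      linarith
    · rw [hb']; linarith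
  have hgcont : ContinuousOn g (Icc 0 T) := by
    apply LipschitzOnWith.continuousOn (K := 1)
    apply LipschitzOnWith.of_dist_le_mul
    intro a ha b hb
    have hmain : dist (g a) (g b) ≤ dist a b := by
      rcases le_total a b with h | h
      · obtain ⟨hm, hd⟩ := hkey a ha b hb h
        rw [Real.dist_eq, Real.dist_eq, abs_sub_comm (g a), abs_of_nonneg (sub_nonneg.2 hm)]
        calc g b - g a ≤ b - a := hd
          _ ≤ |a - b| := by rw [abs_sub_comm]; exact le_abs_self _
      · obtain ⟨hm, hd⟩ := hkey b hb a ha h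
        rw [Real.dist_eq, Real.dist_eq, abs_of_nonneg (sub_nonneg.2 hm)]
        calc g a - g b ≤ a - b := hd
          _ ≤ |a - b| := le_abs_self _
    simpa using hmain
  have hg0 : g 0 = 0 := by
    simp only [hgdef, Icc_self]
    rw [eVariationOn.subsingleton γ subsingleton_singleton]
    simp
  have hgTnn : 0 ≤ g T := ENNReal.toReal_nonneg
  have hmem : g T / 2 ∈ Icc (g 0) (g T) := by
    rw [hg0]; constructor <;> linarith
  obtain ⟨t, htmem, hgt⟩ := intermediate_value_Icc hT hgcont hmem
  -- both halves of the variation equal `g T / 2`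
  have h1 : eVariationOn γ (Icc 0 t) = ENNReal.ofReal (g T / 2) := by
    rw [← hgt]
    exact (ENNReal.ofReal_toReal (hfin' t htmem)).symm
  have hadd' := hadd t T htmem ⟨hT, le_rfl⟩ htmem.2
  have hfin2 : eVariationOn γ (Icc t T) ≠ ⊤ := by
    intro h
    rw [h] at hadd'
    simp only [add_top] at hadd'
    exact hfin hadd'.symm
  have h2 : eVariationOn γ (Icc t T) = ENNReal.ofReal (g T / 2) := by
    have hco := congrArg ENNReal.toReal hadd'
    rw [ENNReal.toReal_add (hfin' t htmem) hfin2] at hco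
    have h4 : (eVariationOn γ (Icc t T)).toReal = g T / 2 := by
      have hgt' : (eVariationOn γ (Icc 0 t)).toReal = g T / 2 := hgt
      have hgT' : (eVariationOn γ (Icc 0 T)).toReal = g T := rfl
      linarith [hco, hgt']
    rw [← h4]
    exact (ENNReal.ofReal_toReal hfin2).symm
  have hcig' := hcig t htmem
  rw [h1, h2, min_self] at hcig'
  have hbnn : 0 ≤ A * bdist (γ t) := mul_nonneg (by linarith) (bdist_nonneg _)
  have hhalf : g T / 2 ≤ A * bdist (γ t) := (ENNReal.ofReal_le_ofReal_iff hbnn).1 hcig'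
  have hdxy : dist x y ≤ g T := by
    have h := eVariationOn.edist_le γ (show (0:ℝ) ∈ Icc 0 T from ⟨le_rfl, hT⟩)
      (show T ∈ Icc (0:ℝ) T from ⟨hT, le_rfl⟩)
    rw [hγ0, hγT] at h
    have h' := ENNReal.toReal_mono hfin h
    simpa [dist_edist] using h'
  have hbw := hw (γ t)
  have hbγnn := bdist_nonneg (γ t)
  calc dist x y ≤ g T := hdxy
    _ = 2 * (g T / 2) := by ring
    _ ≤ 2 * (A * bdist (γ t)) := by linarith
    _ ≤ 2 * (A * bdist w) := by nlinarith
    _ = 2 * A * bdist w := by ring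

lemma exists_ne_of_mbdry {X : Type*} [MetricSpace X] (x₀ : X)
    (h : (mbdry X).Nonempty) : ∃ y : X, y ≠ x₀ := by
  by_contra hcon
  push_neg at hcon
  obtain ⟨ξ, hξ⟩ := h
  have hr : Set.range ((↑) : X → Completion X) = {(x₀ : Completion X)} := by
    ext z
    constructor
    · rintro ⟨y, rfl⟩
      simp [hcon y]
    · rintro rfl
      exact ⟨x₀, rfl⟩
  have hd : ξ ∈ closure (Set.range ((↑) : X → Completion X)) :=
    Completion.denseRange_coe ξ
  rw [hr, closure_singleton] at hd
  simp only [mbdry, Set.mem_compl_iff] at hξ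
  rw [hr] at hξ
  exact hξ hd

lemma diam_pos_of_mbdry {X : Type*} [MetricSpace X] (x₀ : X)
    (h : (mbdry X).Nonempty) (hbdd : Bornology.IsBounded (Set.univ : Set X)) :
    0 < Metric.diam (Set.univ : Set X) := by
  obtain ⟨y, hy⟩ := exists_ne_of_mbdry x₀ h
  have h1 : 0 < dist y x₀ := dist_pos.2 hy
  exact lt_of_lt_of_le h1 (Metric.dist_le_diam_of_mem hbdd trivial trivial)

lemma exists_far {X : Type*} [MetricSpace X]
    (hpos : 0 < Metric.diam (Set.univ : Set X)) (x : X) :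
    ∃ b : X, Metric.diam (Set.univ : Set X) / 4 ≤ dist x b := by
  by_contra h
  push_neg at h
  have hle : Metric.diam (Set.univ : Set X) ≤ 2 * (Metric.diam (Set.univ : Set X) / 4) := by
    apply Metric.diam_le_of_forall_dist_le (by linarith)
    intro a _ b _
    have ha := h a
    have hb := h b
    calc dist a b ≤ dist a x + dist x b := dist_triangle _ _ _
      _ ≤ Metric.diam (Set.univ : Set X) / 4 + Metric.diam (Set.univ : Set X) / 4 := by
          rw [dist_comm a x]; exact add_le_add ha.le hb.le
      _ = 2 * (Metric.diam (Set.univ : Set X) / 4) := by ring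
  linarith

end QSAux

open QSAux in
/-- If `f : Ω → Ω'` is an `η`-quasisymmetric homeomorphism between bounded `A`-uniform
metric spaces and `w ∈ Ω` maximizes the distance to the boundary, then
`diam Ω' ≤ 2η(4A)·d'(f(w))`. -/
theorem diam_image_le_qs {Ω Ω' : Type*} [MetricSpace Ω] [MetricSpace Ω']
    [LocallyCompactSpace Ω] [LocallyCompactSpace Ω']
    (A : ℝ) (hA : 1 ≤ A)
    (hnc : (mbdry Ω).Nonempty) (hnc' : (mbdry Ω').Nonempty)
    (hbdd : Bornology.IsBounded (Set.univ : Set Ω))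
    (hbdd' : Bornology.IsBounded (Set.univ : Set Ω'))
    (huni : IsUniformSpaceA Ω A) (huni' : IsUniformSpaceA Ω' A)
    (f : Ω ≃ₜ Ω') (η : ℝ → ℝ)
    (hη0 : η 0 = 0) (hηmono : StrictMonoOn η (Ici 0)) (hηcont : ContinuousOn η (Ici 0))
    (hηsurj : ∀ y : ℝ, 0 ≤ y → ∃ u : ℝ, 0 ≤ u ∧ η u = y)
    (hqs : ∀ (x a b : Ω) (u : ℝ), 0 ≤ u →
      dist x a ≤ u * dist x b → dist (f x) (f a) ≤ η u * dist (f x) (f b))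
    (w : Ω) (hw : ∀ x : Ω, bdist x ≤ bdist w) :
    Metric.diam (Set.univ : Set Ω') ≤ 2 * η (4 * A) * bdist (f w) := by
  have hbw0 : 0 ≤ bdist w := bdist_nonneg w
  have hΩkey : ∀ x y : Ω, dist x y ≤ 2 * A * bdist w :=
    dist_le_of_uniform hA huni w hw
  -- positivity of `bdist w`
  have hbwpos : 0 < bdist w := by
    obtain ⟨y, hy⟩ := exists_ne_of_mbdry w hnc
    have h1 : 0 < dist y w := dist_pos.2 hy
    have h2 := hΩkey y w
    nlinarith
  have hS : 0 < Metric.diam (Set.univ : Set Ω) := diam_pos_of_mbdry w hnc hbdd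
  have hS' : 0 < Metric.diam (Set.univ : Set Ω') := diam_pos_of_mbdry (f w) hnc' hbdd'
  set S := Metric.diam (Set.univ : Set Ω) with hSdef
  set S' := Metric.diam (Set.univ : Set Ω') with hS'def
  -- η is positive on the positive reals
  have hηpos : ∀ u : ℝ, 0 < u → 0 < η u := by
    intro u hu
    have := hηmono (self_mem_Ici) (show u ∈ Ici (0:ℝ) from hu.le) hu
    rwa [hη0] at this
  -- f is uniformly continuous
  have hucf : UniformContinuous (⇑f) := by
    rw [Metric.uniformContinuous_iff]
    intro ε hε
    obtain ⟨u₀, hu₀0, hu₀⟩ := hηsurj (ε / (2 * S')) (by positivity)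
    have hu₀pos : 0 < u₀ := by
      rcases hu₀0.lt_or_eq with h | h
      · exact h
      · exfalso
        rw [← h, hη0] at hu₀
        have : 0 < ε / (2 * S') := by positivity
        linarith
    refine ⟨S / 4 * u₀, by positivity, ?_⟩
    intro a b hab
    obtain ⟨c, hc⟩ := exists_far hS a
    have h1 : dist a b ≤ u₀ * dist a c := by
      calc dist a b ≤ S / 4 * u₀ := hab.le
        _ = u₀ * (S / 4) := by ring
        _ ≤ u₀ * dist a c := mul_le_mul_of_nonneg_left hc hu₀0
    have h2 := hqs a b c u₀ hu₀0 h1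
    have h3 : dist (f a) (f c) ≤ S' := Metric.dist_le_diam_of_mem hbdd' trivial trivial
    have h4 : η u₀ * dist (f a) (f c) ≤ (ε / (2 * S')) * S' := by
      rw [hu₀]
      apply mul_le_mul_of_nonneg_left h3 (by positivity)
    have h5 : (ε / (2 * S')) * S' = ε / 2 := by field_simp
    calc dist (f a) (f b) ≤ η u₀ * dist (f a) (f c) := h2
      _ ≤ ε / 2 := by rw [← h5]; exact h4
      _ < ε := by linarith
  -- f.symm is uniformly continuous
  have hucg : UniformContinuous (⇑f.symm) := by
    rw [Metric.uniformContinuous_iff]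
    intro ε hε
    have hη' : 0 < η (S / ε) := hηpos _ (by positivity)
    refine ⟨S' / 4 / η (S / ε), by positivity, ?_⟩
    intro y₁ y₂ h12
    by_contra hcon
    push_neg at hcon
    set x₁ := f.symm y₁
    set x₂ := f.symm y₂
    obtain ⟨z', hz'⟩ := exists_far hS' y₁
    set x₃ := f.symm z'
    have h1 : dist x₁ x₃ ≤ (S / ε) * dist x₁ x₂ := by
      calc dist x₁ x₃ ≤ S := Metric.dist_le_diam_of_mem hbdd trivial trivial
        _ = (S / ε) * ε := by field_simp
        _ ≤ (S / ε) * dist x₁ x₂ := mul_le_mul_of_nonneg_left hcon (by positivity)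
    have h2 := hqs x₁ x₃ x₂ (S / ε) (by positivity) h1
    rw [f.apply_symm_apply, f.apply_symm_apply, f.apply_symm_apply] at h2
    -- h2 : dist y₁ z' ≤ η (S/ε) * dist y₁ y₂
    have h3 : S' / 4 ≤ η (S / ε) * dist y₁ y₂ := le_trans hz' h2
    have h4 : S' / 4 / η (S / ε) ≤ dist y₁ y₂ := by
      rw [div_le_iff₀ hη']
      linarith [h3, mul_comm (η (S / ε)) (dist y₁ y₂)]
    linarith
  -- the extension of `f.symm` to the completions maps the boundary into the boundary
  have hGF : ∀ z : Completion Ω',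
      Completion.map (⇑f) (Completion.map (⇑f.symm) z) = z := by
    intro z
    have hcomp := Completion.map_comp hucf hucg
    have hid : (⇑f) ∘ (⇑f.symm) = id := funext fun y => f.apply_symm_apply y
    calc Completion.map (⇑f) (Completion.map (⇑f.symm) z)
        = (Completion.map (⇑f) ∘ Completion.map (⇑f.symm)) z := rfl
      _ = Completion.map ((⇑f) ∘ (⇑f.symm)) z := by rw [hcomp]
      _ = Completion.map (id : Ω' → Ω') z := by rw [hid]
      _ = z := by rw [Completion.map_id]; rfl
  have hGbd : ∀ ξ ∈ mbdry Ω', Completion.map (⇑f.symm) ξ ∈ mbdry Ω := by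
    intro ξ hξ
    simp only [mbdry, Set.mem_compl_iff, Set.mem_range] at hξ ⊢
    rintro ⟨x, hx⟩
    apply hξ
    refine ⟨f x, ?_⟩
    have hmc : Completion.map (⇑f) ((x : Completion Ω)) = ((f x : Ω') : Completion Ω') :=
      Completion.map_coe hucf x
    rw [← hmc, hx, hGF]
  have hη4A : 0 < η (4 * A) := hηpos _ (by linarith)
  -- key estimate : every point of Ω' is within η(4A)·d'(f w) of f w
  have key : ∀ y' : Ω', dist (f w) y' ≤ η (4 * A) * bdist (f w) := by
    intro y'
    refine le_of_forall_pos_le_add ?_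
    intro ε' hε'
    set ε := ε' / (2 * η (4 * A)) with hεdef
    have hεpos : 0 < ε := by positivity
    -- a near-optimal boundary point ξ of Ω'
    have hlt : Metric.infDist ((f w : Ω') : Completion Ω') (mbdry Ω') < bdist (f w) + ε := by
      simpa [bdist] using lt_add_of_pos_right (bdist (f w)) hεpos
    obtain ⟨ξ, hξmem, hξd⟩ := (Metric.infDist_lt_iff hnc').1 hlt
    -- continuity of the extension of f.symm at ξ
    have hGξ : Completion.map (⇑f.symm) ξ ∈ mbdry Ω := hGbd ξ hξmem
    have hcont : ContinuousAt (Completion.map (⇑f.symm)) ξ :=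
      Completion.continuous_map.continuousAt
    obtain ⟨δ, hδpos, hδ⟩ := Metric.continuousAt_iff.1 hcont (bdist w / 2) (by positivity)
    -- a point b' of Ω' close to ξ
    obtain ⟨b', hb'⟩ := Metric.denseRange_iff.1 Completion.denseRange_coe ξ
      (min δ ε) (lt_min hδpos hεpos)
    set b : Ω := f.symm b' with hbdef
    have hfb : f b = b' := f.apply_symm_apply b'
    have hGb : ((b : Ω) : Completion Ω) = Completion.map (⇑f.symm) ((b' : Completion Ω')) :=
      (Completion.map_coe hucg b').symm
    have hbsmall : bdist b ≤ bdist w / 2 := by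
      have hz : dist ((b' : Completion Ω')) ξ < δ := by
        rw [dist_comm]
        exact lt_of_lt_of_le hb' (min_le_left _ _)
      have h1 : dist ((b : Completion Ω)) (Completion.map (⇑f.symm) ξ) < bdist w / 2 := by
        rw [hGb]
        exact hδ hz
      exact (le_of_lt (lt_of_le_of_lt (Metric.infDist_le_dist_of_mem hGξ) h1))
    have hwb : bdist w / 2 ≤ dist w b := by
      have h := bdist_le_add w b
      linarith
    have happ : dist w (f.symm y') ≤ (4 * A) * dist w b := by
      calc dist w (f.symm y') ≤ 2 * A * bdist w := hΩkey _ _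
        _ = (4 * A) * (bdist w / 2) := by ring
        _ ≤ (4 * A) * dist w b := mul_le_mul_of_nonneg_left hwb (by linarith)
    have hq := hqs w (f.symm y') b (4 * A) (by linarith) happ
    rw [f.apply_symm_apply, hfb] at hq
    have hdfb : dist (f w) b' ≤ bdist (f w) + 2 * ε := by
      have h2 : dist ξ ((b' : Completion Ω')) < ε := lt_of_lt_of_le hb' (min_le_right _ _)
      have h3 : dist ((f w : Ω') : Completion Ω') ((b' : Completion Ω')) ≤
          dist ((f w : Ω') : Completion Ω') ξ + dist ξ ((b' : Completion Ω')) :=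
        dist_triangle _ _ _
      have h4 : dist ((f w : Ω') : Completion Ω') ((b' : Completion Ω')) = dist (f w) b' :=
        Completion.dist_eq _ _
      rw [h4] at h3
      linarith
    have h5 : 2 * η (4 * A) * ε = ε' := by
      rw [hεdef]
      field_simp
    calc dist (f w) y' ≤ η (4 * A) * dist (f w) b' := hq
      _ ≤ η (4 * A) * (bdist (f w) + 2 * ε) :=
          mul_le_mul_of_nonneg_left hdfb hη4A.le
      _ = η (4 * A) * bdist (f w) + 2 * η (4 * A) * ε := by ring
      _ = η (4 * A) * bdist (f w) + ε' := by rw [h5]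
  -- conclude
  have hnn : 0 ≤ 2 * η (4 * A) * bdist (f w) :=
    mul_nonneg (mul_nonneg (by norm_num) hη4A.le) (bdist_nonneg _)
  apply Metric.diam_le_of_forall_dist_le hnn
  intro y₁ _ y₂ _
  calc dist y₁ y₂ ≤ dist y₁ (f w) + dist (f w) y₂ := dist_triangle _ _ _
    _ ≤ η (4 * A) * bdist (f w) + η (4 * A) * bdist (f w) := by
        refine add_le_add ?_ (key y₂)
        rw [dist_comm]
        exact key y₁
    _ = 2 * η (4 * A) * bdist (f w) := by ring
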